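/- A connected simple graph Γ is locally the graph on two nonadjacent vertices (i.e. every vertex has exactly two neighbors and these two neighbors are nonadjacent) if and only if Γ is isomorphic to the cycle graph C_n for some finite n ≥ 4 or to the infinite cycle C_∞, the graph on the integers ℤ in which x and y are adjacent iff |x − y| = 1. -/

import Mathlib

/-- The infinite cycle `C_∞`: the graph on `ℤ` in which `x` and `y` are adjacent
iff `|x - y| = 1`. -/
def intCycle : SimpleGraph ℤ :=
  SimpleGraph.fromRel fun x y => x = y + 1

namespace Stmt5Aux
open SimpleGraph

variable {V : Type*} {W : Type*} {Γ : SimpleGraph V}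

def LocP (Γ : SimpleGraph V) (v : V) : Prop :=
  ∃ a b : V, a ≠ b ∧ ¬Γ.Adj a b ∧ Γ.neighborSet v = {a, b}

lemma locP_of_iso {Γ : SimpleGraph V} {v : V}
    (h : Nonempty (Γ.induce (Γ.neighborSet v) ≃g (⊥ : SimpleGraph (Fin 2)))) : LocP Γ v := by
  obtain ⟨φ⟩ := h
  refine ⟨(φ.symm 0).val, (φ.symm 1).val, ?_, ?_, ?_⟩
  · intro h
    have : φ.symm 0 = φ.symm 1 := Subtype.ext h
    have := φ.symm.toEquiv.injective this
    simp at this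
  · intro hadj
    have h2 : (Γ.induce (Γ.neighborSet v)).Adj (φ.symm 0) (φ.symm 1) := by
      simp only [comap_adj, Function.Embedding.coe_subtype]
      exact hadj
    have := φ.map_rel_iff.mpr h2
    simp at this
  · ext u
    simp only [mem_neighborSet, Set.mem_insert_iff, Set.mem_singleton_iff]
    constructor
    · intro hu
      have hfin : ∀ i : Fin 2, i = 0 ∨ i = 1 := by decide
      rcases hfin (φ ⟨u, hu⟩) with h0 | h0
      · left
        have : φ.symm (φ ⟨u, hu⟩) = φ.symm 0 := by rw [h0]
        have h2 := congrArg Subtype.val this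
        simp at h2
        exact h2
      · right
        have : φ.symm (φ ⟨u, hu⟩) = φ.symm 1 := by rw [h0]
        have h2 := congrArg Subtype.val this
        simp at h2
        exact h2
    · rintro (rfl | rfl)
      · exact (φ.symm 0).2
      · exact (φ.symm 1).2

lemma iso_of_locP {Γ : SimpleGraph V} {v : V} (h : LocP Γ v) :
    Nonempty (Γ.induce (Γ.neighborSet v) ≃g (⊥ : SimpleGraph (Fin 2))) := by
  obtain ⟨a, b, hab, hnadj, hset⟩ := h
  have ha : a ∈ Γ.neighborSet v := by rw [hset]; exact Set.mem_insert a {b}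
  have hb : b ∈ Γ.neighborSet v := by rw [hset]; exact Set.mem_insert_of_mem a rfl
  have hmem : ∀ u : Γ.neighborSet v, u.val = a ∨ u.val = b := by
    intro u
    have h2 : u.val ∈ ({a, b} : Set V) := hset ▸ u.2
    simpa using h2
  classical
  refine ⟨⟨⟨fun u => if u.val = a then 0 else 1,
    fun i => if i = 0 then ⟨a, ha⟩ else ⟨b, hb⟩, ?_, ?_⟩, ?_⟩⟩
  · intro u
    rcases hmem u with h0 | h0
    · simp [h0]; exact Subtype.ext h0.symm
    · have : u.val ≠ a := by rw [h0]; exact fun h => hab h.symm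
      simp [this]
      exact Subtype.ext h0.symm
  · intro i
    have hfin : i = 0 ∨ i = 1 := by omega
    rcases hfin with rfl | rfl
    · simp
    · have : b ≠ a := fun h => hab h.symm
      simp [this]
  · intro x y
    simp only [Equiv.coe_fn_mk, bot_adj, comap_adj, Function.Embedding.coe_subtype,
      iff_false, false_iff]
    intro hadj
    rcases hmem x with hx | hx <;> rcases hmem y with hy | hy
    · rw [hx, hy] at hadj; exact Γ.irrefl hadj
    · rw [hx, hy] at hadj; exact hnadj hadj
    · rw [hx, hy] at hadj; exact hnadj hadj.symm
    · rw [hx, hy] at hadj; exact Γ.irrefl hadj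

lemma locP_map {Γ : SimpleGraph V} {Γ' : SimpleGraph W} (e : Γ ≃g Γ') (v : V)
    (h : LocP Γ' (e v)) : LocP Γ v := by
  obtain ⟨a, b, hab, hnadj, hset⟩ := h
  refine ⟨e.symm a, e.symm b, ?_, ?_, ?_⟩
  · intro h
    exact hab (by simpa using congrArg e h)
  · intro h
    have := e.symm.map_rel_iff.mp h
    exact hnadj this
  · ext u
    simp only [mem_neighborSet, Set.mem_insert_iff, Set.mem_singleton_iff]
    have : Γ.Adj v u ↔ Γ'.Adj (e v) (e u) := e.map_rel_iff.symm
    rw [this]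
    have : Γ'.Adj (e v) (e u) ↔ e u ∈ Γ'.neighborSet (e v) := Iff.rfl
    rw [this, hset]
    simp only [Set.mem_insert_iff, Set.mem_singleton_iff]
    constructor
    · rintro (h | h)
      · left; rw [← h]; simp
      · right; rw [← h]; simp
    · rintro (rfl | rfl)
      · left; simp
      · right; simp

lemma intCycle_adj (x y : ℤ) : intCycle.Adj x y ↔ x ≠ y ∧ (x = y + 1 ∨ y = x + 1) := by
  simp [intCycle, fromRel_adj]

lemma locP_intCycle (z : ℤ) :
    (∃ a b : ℤ, a ≠ b ∧ ¬intCycle.Adj a b ∧ intCycle.neighborSet z = {a, b}) := by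
  refine ⟨z - 1, z + 1, by omega, ?_, ?_⟩
  · rw [intCycle_adj]; omega
  · ext u
    simp only [mem_neighborSet, Set.mem_insert_iff, Set.mem_singleton_iff, intCycle_adj]
    omega

lemma locP_cycleGraph (n : ℕ) (hn : 4 ≤ n) (w : Fin n) :
    (∃ a b : Fin n, a ≠ b ∧ ¬(cycleGraph n).Adj a b ∧
      (cycleGraph n).neighborSet w = {a, b}) := by
  obtain ⟨m, rfl⟩ : ∃ m, n = m + 2 + 2 := ⟨n - 4, by omega⟩
  have h1 : ((1 : Fin (m + 2 + 2))) ≠ 0 := by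
    intro h
    have := congrArg Fin.val h
    rw [Fin.val_one, Fin.val_zero] at this
    omega
  have h2 : ((1 : Fin (m + 2 + 2)) + 1) ≠ 0 := by
    intro h
    have := congrArg Fin.val h
    simp only [Fin.val_add, Fin.val_one, Fin.val_zero] at this
    rw [Nat.mod_eq_of_lt (by omega)] at this
    omega
  have h3 : ((1 : Fin (m + 2 + 2)) + 1 + 1) ≠ 0 := by
    intro h
    have := congrArg Fin.val h
    simp only [Fin.val_add, Fin.val_one, Fin.val_zero] at this
    rw [Nat.mod_eq_of_lt (show (1:ℕ) + 1 < m+2+2 by omega),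
      Nat.mod_eq_of_lt (by omega)] at this
    omega
  refine ⟨w - 1, w + 1, ?_, ?_, ?_⟩
  · intro h
    exact h2 (by open Fin.CommRing in linear_combination -h)
  · rw [cycleGraph_adj]
    rintro (h | h)
    · exact h3 (by open Fin.CommRing in linear_combination -h)
    · exact h1 (by open Fin.CommRing in linear_combination h)
  · rw [show (m + 2 + 2) = (m + 2) + 2 from rfl] at *
    rw [cycleGraph_neighborSet]

lemma mem_pair_of_adj {v a b u : V} (hset : Γ.neighborSet v = {a, b}) (h : Γ.Adj v u) :
    u = a ∨ u = b := by
  have : u ∈ ({a, b} : Set V) := hset ▸ h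
  simpa using this

lemma exists_unique_other (H : ∀ v, LocP Γ v) (v u : V) (h : Γ.Adj v u) :
    ∃! w, Γ.Adj v w ∧ w ≠ u := by
  obtain ⟨a, b, hab, hnadj, hset⟩ := H v
  have ha : Γ.Adj v a := by rw [← mem_neighborSet, hset]; exact Set.mem_insert a {b}
  have hb : Γ.Adj v b := by rw [← mem_neighborSet, hset]; exact Set.mem_insert_of_mem a rfl
  rcases mem_pair_of_adj hset h with rfl | rfl
  · refine ⟨b, ⟨hb, fun hh => hab hh.symm⟩, ?_⟩
    intro y ⟨hy, hyu⟩
    rcases mem_pair_of_adj hset hy with rfl | rfl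
    · exact absurd rfl hyu
    · rfl
  · refine ⟨a, ⟨ha, hab⟩, ?_⟩
    intro y ⟨hy, hyu⟩
    rcases mem_pair_of_adj hset hy with rfl | rfl
    · rfl
    · exact absurd rfl hyu

open Classical in
noncomputable def other (H : ∀ v, LocP Γ v) (v u : V) : V :=
  if h : Γ.Adj v u then (exists_unique_other H v u h).exists.choose else v

lemma other_spec (H : ∀ v, LocP Γ v) {v u : V} (h : Γ.Adj v u) :
    Γ.Adj v (other H v u) ∧ other H v u ≠ u := by
  rw [other, dif_pos h]
  exact (exists_unique_other H v u h).exists.choose_spec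

lemma adj_other (H : ∀ v, LocP Γ v) {v u : V} (h : Γ.Adj v u) :
    Γ.Adj v (other H v u) := (other_spec H h).1

lemma other_ne (H : ∀ v, LocP Γ v) {v u : V} (h : Γ.Adj v u) :
    other H v u ≠ u := (other_spec H h).2

lemma other_unique (H : ∀ v, LocP Γ v) {v u w : V} (h : Γ.Adj v u)
    (hw : Γ.Adj v w) (hwu : w ≠ u) : w = other H v u := by
  obtain ⟨x, hx, hun⟩ := exists_unique_other H v u h
  have h1 := hun w ⟨hw, hwu⟩
  have h2 := hun (other H v u) ⟨adj_other H h, other_ne H h⟩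
  rw [h1, h2]

lemma other_other (H : ∀ v, LocP Γ v) {v u : V} (h : Γ.Adj v u) :
    other H v (other H v u) = u :=
  (other_unique H (adj_other H h) h (fun hh => other_ne H h hh.symm)).symm

lemma mem_other (H : ∀ v, LocP Γ v) {v u w : V} (h : Γ.Adj v u) (hw : Γ.Adj v w) :
    w = u ∨ w = other H v u := by
  by_cases hwu : w = u
  · exact Or.inl hwu
  · exact Or.inr (other_unique H h hw hwu)

lemma nonadj_of_adj (H : ∀ v, LocP Γ v) {v x y : V} (h1 : Γ.Adj v x) (h2 : Γ.Adj v y)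
    (hxy : x ≠ y) : ¬Γ.Adj x y := by
  obtain ⟨a, b, hab, hnadj, hset⟩ := H v
  rcases mem_pair_of_adj hset h1 with rfl | rfl <;>
    rcases mem_pair_of_adj hset h2 with rfl | rfl
  · exact absurd rfl hxy
  · exact hnadj
  · exact fun h => hnadj h.symm
  · exact absurd rfl hxy

/-- rotation of darts -/
noncomputable def rot (H : ∀ v, LocP Γ v) : Equiv.Perm Γ.Dart where
  toFun d := ⟨(d.snd, other H d.snd d.fst), adj_other H d.adj.symm⟩
  invFun d := ⟨(other H d.fst d.snd, d.fst), (adj_other H d.adj).symm⟩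
  left_inv d := by
    apply SimpleGraph.Dart.ext
    apply Prod.ext
    · exact other_other H d.adj.symm
    · rfl
  right_inv d := by
    apply SimpleGraph.Dart.ext
    apply Prod.ext
    · rfl
    · exact other_other H d.adj

@[simp] lemma rot_fst (H : ∀ v, LocP Γ v) (d : Γ.Dart) : (rot H d).fst = d.snd := rfl

@[simp] lemma rot_snd (H : ∀ v, LocP Γ v) (d : Γ.Dart) :
    (rot H d).snd = other H d.snd d.fst := rfl

lemma rot_symm (H : ∀ v, LocP Γ v) (d : Γ.Dart) :
    rot H (rot H d).symm = d.symm := by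
  apply SimpleGraph.Dart.ext
  apply Prod.ext
  · rfl
  · exact other_other H d.adj.symm


section Traj

variable (H : ∀ v, LocP Γ v) (d0 : Γ.Dart)

noncomputable def traj (n : ℤ) : V := ((rot H ^ n) d0).fst

lemma pow_succ_apply (n : ℤ) (d : Γ.Dart) :
    (rot H ^ (n + 1)) d = rot H ((rot H ^ n) d) := by
  rw [show n + 1 = 1 + n by ring, zpow_add, zpow_one, Equiv.Perm.mul_apply]

lemma traj_snd (n : ℤ) : ((rot H ^ n) d0).snd = traj H d0 (n + 1) := by
  rw [traj, pow_succ_apply, rot_fst]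

lemma traj_adj (n : ℤ) : Γ.Adj (traj H d0 n) (traj H d0 (n + 1)) := by
  rw [traj, ← traj_snd]
  exact ((rot H ^ n) d0).adj

lemma traj_other (n : ℤ) :
    traj H d0 (n + 1) = other H (traj H d0 n) (traj H d0 (n - 1)) := by
  have h : (rot H ^ n) d0 = rot H ((rot H ^ (n - 1)) d0) := by
    rw [← pow_succ_apply]; norm_num
  have hfst : traj H d0 (n - 1) = ((rot H ^ (n-1)) d0).fst := rfl
  have hsnd : ((rot H ^ (n-1)) d0).snd = traj H d0 n := by
    rw [traj_snd]; norm_num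
  rw [← traj_snd, h, rot_snd, hsnd, hfst]

lemma traj_nbr {n : ℤ} {w : V} (hw : Γ.Adj (traj H d0 n) w) :
    w = traj H d0 (n - 1) ∨ w = traj H d0 (n + 1) := by
  have hadj : Γ.Adj (traj H d0 n) (traj H d0 (n - 1)) := by
    have := (traj_adj H d0 (n - 1)).symm
    rwa [show n - 1 + 1 = n by ring] at this
  rcases mem_other H hadj hw with h | h
  · exact Or.inl h
  · right; rw [h, ← traj_other]

lemma traj_ne (n : ℤ) : traj H d0 (n - 1) ≠ traj H d0 (n + 1) := by
  intro h
  have hadj : Γ.Adj (traj H d0 n) (traj H d0 (n - 1)) := by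
    have := (traj_adj H d0 (n - 1)).symm
    rwa [show n - 1 + 1 = n by ring] at this
  exact other_ne H hadj (by rw [← traj_other, ← h])

lemma rot_symm_pow (k : ℤ) (d : Γ.Dart) :
    (rot H ^ k) ((rot H ^ k) d).symm = d.symm := by
  induction k using Int.induction_on generalizing d with
  | zero => simp
  | succ i ih =>
    have h1 : (rot H ^ ((i:ℤ) + 1)) = (rot H ^ (i:ℤ)) * rot H := zpow_add_one _ _
    rw [pow_succ_apply, h1, Equiv.Perm.mul_apply, ih (rot H d)]
    exact rot_symm H d
  | pred i ih =>
    have key : ((rot H ^ ((-i:ℤ) - 1)) d).symm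
        = rot H ((rot H ^ ((-i:ℤ))) d).symm := by
      have := rot_symm H ((rot H ^ ((-i:ℤ) - 1)) d)
      rw [← pow_succ_apply] at this
      rw [show (-i:ℤ) - 1 + 1 = (-i:ℤ) by ring] at this
      exact this.symm
    rw [key]
    have : (rot H ^ ((-i:ℤ) - 1)) (rot H ((rot H ^ ((-i:ℤ))) d).symm)
        = (rot H ^ ((-i:ℤ))) ((rot H ^ ((-i:ℤ))) d).symm := by
      rw [show ((-i:ℤ) - 1) = (-i:ℤ) + -1 by ring, zpow_add, Equiv.Perm.mul_apply]
      congr 1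
      rw [zpow_neg_one]
      exact Equiv.symm_apply_apply _ _
    rw [this, ih d]

lemma symm_pow (k : ℤ) (d : Γ.Dart) :
    ((rot H ^ k) d).symm = (rot H ^ (-k)) d.symm := by
  have := rot_symm_pow H k d
  have h2 := congrArg (rot H ^ (-k) : Equiv.Perm Γ.Dart) this
  rw [← Equiv.Perm.mul_apply, ← zpow_add, neg_add_cancel, zpow_zero,
    Equiv.Perm.one_apply] at h2
  exact h2

end Traj


lemma dvd_iff_zero (n z : ℤ) (h1 : -n < z) (h2 : z < n) : n ∣ z ↔ z = 0 := by
  constructor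
  · intro h
    rcases eq_or_ne z 0 with h0 | h0
    · exact h0
    · have hle := Int.le_of_dvd (abs_pos.mpr h0) ((dvd_abs n z).mpr h)
      exact absurd (abs_lt.mpr ⟨h1, h2⟩) (not_lt.mpr hle)
  · rintro rfl; exact dvd_zero n

lemma fin_sub_eq_one_iff (m : ℕ) (i j : Fin (m + 2)) :
    i - j = 1 ↔ ((m + 2 : ℕ) : ℤ) ∣ ((i.val : ℤ) - (j.val : ℤ) - 1) := by
  have hi := i.isLt
  have hj := j.isLt
  rw [Fin.ext_iff, Fin.sub_def, Fin.val_one]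
  simp only [Fin.val_mk]
  rcases le_or_gt j.val i.val with hle | hlt
  · have h1 : (m + 2) - j.val + i.val = (m + 2) + (i.val - j.val) := by omega
    have h2 : (i.val - j.val) % (m + 2) = i.val - j.val := Nat.mod_eq_of_lt (by omega)
    rw [h1, Nat.add_mod_left, h2, dvd_iff_zero _ _ (by omega) (by omega)]
    omega
  · have h1 : (m + 2) - j.val + i.val = (m + 2) - (j.val - i.val) := by omega
    have h2 : ((m + 2) - (j.val - i.val)) % (m + 2) = (m + 2) - (j.val - i.val) :=
      Nat.mod_eq_of_lt (by omega)
    rw [h1, h2]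
    have key : ((m + 2 : ℕ) : ℤ) ∣ ((i.val : ℤ) - j.val - 1) ↔
        ((m + 2 : ℕ) : ℤ) ∣ ((i.val : ℤ) - j.val - 1 + (m + 2)) := by
      constructor
      · intro h; exact dvd_add h dvd_rfl
      · intro h; simpa using dvd_sub h (dvd_refl ((m + 2 : ℕ) : ℤ))
    rw [key, dvd_iff_zero _ _ (by omega) (by omega)]
    omega

lemma iso_cycle_of_period (f : ℤ → V) (p : ℕ) (hp4 : 4 ≤ p)
    (hfeq : ∀ x y : ℤ, f x = f y ↔ (p : ℤ) ∣ (y - x))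
    (hsur : ∀ u : V, ∃ n : ℤ, f n = u)
    (hadj : ∀ n : ℤ, Γ.Adj (f n) (f (n + 1)))
    (hnbr : ∀ (n : ℤ) (w : V), Γ.Adj (f n) w → w = f (n - 1) ∨ w = f (n + 1)) :
    Nonempty (Γ ≃g SimpleGraph.cycleGraph p) := by
  obtain ⟨m, rfl⟩ : ∃ m, p = m + 2 := ⟨p - 2, by omega⟩
  have hppos : (0 : ℤ) < ((m + 2 : ℕ) : ℤ) := by exact_mod_cast Nat.succ_pos _
  have hFinj : Function.Injective (fun i : Fin (m + 2) => f i.val) := by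
    intro i j hij
    have hd := (hfeq i.val j.val).mp hij
    have hi := i.isLt
    have hj := j.isLt
    have hi' : (i.val : ℤ) < ((m + 2 : ℕ) : ℤ) := by exact_mod_cast hi
    have hj' : (j.val : ℤ) < ((m + 2 : ℕ) : ℤ) := by exact_mod_cast hj
    have h0 : ((j.val : ℤ) - i.val) = 0 := by
      rw [← dvd_iff_zero ((m + 2 : ℕ) : ℤ) _ (by omega) (by omega)]
      exact hd
    have : (i.val : ℤ) = j.val := by omega
    exact Fin.ext (by exact_mod_cast this)
  have hFsurj : Function.Surjective (fun i : Fin (m + 2) => f i.val) := by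
    intro u
    obtain ⟨n, hn⟩ := hsur u
    have h1 : 0 ≤ n % ((m + 2 : ℕ) : ℤ) := Int.emod_nonneg n (by omega)
    have h2 : n % ((m + 2 : ℕ) : ℤ) < ((m + 2 : ℕ) : ℤ) := Int.emod_lt_of_pos n hppos
    refine ⟨⟨(n % ((m + 2 : ℕ) : ℤ)).toNat, by omega⟩, ?_⟩
    show f (((n % ((m + 2 : ℕ) : ℤ)).toNat : ℕ) : ℤ) = u
    rw [Int.toNat_of_nonneg h1, ← hn]
    exact (hfeq _ _).mpr ⟨n / ((m + 2 : ℕ) : ℤ), by rw [Int.emod_def]; ring⟩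
  refine ⟨RelIso.symm ⟨Equiv.ofBijective _ ⟨hFinj, hFsurj⟩, ?_⟩⟩
  intro i j
  show Γ.Adj (f i.val) (f j.val) ↔ (SimpleGraph.cycleGraph (m + 2)).Adj i j
  have lhs_iff : Γ.Adj (f i.val) (f j.val) ↔
      (f (j.val : ℤ) = f ((i.val : ℤ) - 1) ∨ f (j.val : ℤ) = f ((i.val : ℤ) + 1)) := by
    constructor
    · exact hnbr i.val (f j.val)
    · rintro (h | h)
      · rw [h]
        have := hadj ((i.val : ℤ) - 1)
        rw [show (i.val : ℤ) - 1 + 1 = (i.val : ℤ) by ring] at this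
        exact this.symm
      · rw [h]; exact hadj i.val
  rw [lhs_iff, hfeq, hfeq, SimpleGraph.cycleGraph_adj,
    fin_sub_eq_one_iff m i j, fin_sub_eq_one_iff m j i]
  rw [show ((i.val : ℤ) - 1 - j.val) = (i.val : ℤ) - j.val - 1 by ring,
    show ((i.val : ℤ) + 1 - j.val) = -((j.val : ℤ) - i.val - 1) by ring, dvd_neg]

lemma intCycle_adj' (x y : ℤ) :
    (SimpleGraph.fromRel fun x y : ℤ => x = y + 1).Adj x y ↔
      x ≠ y ∧ (x = y + 1 ∨ y = x + 1) := by
  simp [SimpleGraph.fromRel_adj]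

lemma iso_intCycle_of_inj (f : ℤ → V) (hinj : Function.Injective f)
    (hsur : ∀ u : V, ∃ n : ℤ, f n = u)
    (hadj : ∀ n : ℤ, Γ.Adj (f n) (f (n + 1)))
    (hnbr : ∀ (n : ℤ) (w : V), Γ.Adj (f n) w → w = f (n - 1) ∨ w = f (n + 1)) :
    Nonempty (Γ ≃g SimpleGraph.fromRel fun x y : ℤ => x = y + 1) := by
  refine ⟨RelIso.symm ⟨Equiv.ofBijective f ⟨hinj, fun u => hsur u⟩, ?_⟩⟩
  intro x y
  show Γ.Adj (f x) (f y) ↔ _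
  rw [intCycle_adj']
  constructor
  · intro h
    rcases hnbr x (f y) h with h2 | h2
    · have := hinj h2
      exact ⟨by omega, Or.inl (by omega)⟩
    · have := hinj h2
      exact ⟨by omega, Or.inr (by omega)⟩
  · rintro ⟨hne, h | h⟩
    · have := hadj y
      rw [← h] at this
      exact this.symm
    · rw [h]; exact hadj x

end Stmt5Aux

open Stmt5Aux SimpleGraph in
/-- A connected simple graph is locally the graph on two nonadjacent
vertices if and only if it is isomorphic to a cycle `C_n` with `4 ≤ n` finite, or to the
infinite cycle `C_∞` on `ℤ`. -/
theorem stmt_5 {V : Type*} (Γ : SimpleGraph V) (hΓ : Γ.Connected) :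
    (∀ v : V, Nonempty (Γ.induce (Γ.neighborSet v) ≃g (⊥ : SimpleGraph (Fin 2)))) ↔
      ((∃ n : ℕ, 4 ≤ n ∧ Nonempty (Γ ≃g SimpleGraph.cycleGraph n)) ∨
        Nonempty (Γ ≃g intCycle)) := by
  constructor
  · intro hloc
    have H : ∀ v, LocP Γ v := fun v => locP_of_iso (hloc v)
    obtain ⟨v0⟩ := hΓ.nonempty
    obtain ⟨a, b, hab, hnadj, hset⟩ := H v0
    have ha : Γ.Adj v0 a := by rw [← mem_neighborSet, hset]; exact Set.mem_insert a {b}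
    let d0 : Γ.Dart := ⟨(v0, a), ha⟩
    set σ : Equiv.Perm Γ.Dart := rot H with hσ
    set f : ℤ → V := traj H d0 with hf
    have hfdef : ∀ n : ℤ, f n = ((σ ^ n) d0).fst := fun n => rfl
    -- the stabilizer of `d0` is a subgroup of `ℤ`
    let S : AddSubgroup ℤ :=
      { carrier := {n : ℤ | (σ ^ n) d0 = d0}
        zero_mem' := by simp
        add_mem' := by
          intro x y hx hy
          simp only [Set.mem_setOf_eq] at *
          rw [zpow_add, Equiv.Perm.mul_apply, hy, hx]
        neg_mem' := by
          intro x hx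
          simp only [Set.mem_setOf_eq] at *
          calc (σ ^ (-x)) d0 = (σ ^ (-x)) ((σ ^ x) d0) := by rw [hx]
            _ = d0 := by
              rw [← Equiv.Perm.mul_apply, ← zpow_add, neg_add_cancel, zpow_zero,
                Equiv.Perm.one_apply] }
    obtain ⟨g, hg⟩ := Int.subgroup_cyclic S
    have hmem : ∀ n : ℤ, (σ ^ n) d0 = d0 ↔ g ∣ n := by
      intro n
      have h1 : n ∈ S ↔ (σ ^ n) d0 = d0 := Iff.rfl
      rw [← h1, hg, AddSubgroup.mem_closure_singleton]
      constructor
      · rintro ⟨k, hk⟩; exact ⟨k, by rw [← hk, smul_eq_mul]; ring⟩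
      · rintro ⟨c, hc⟩; exact ⟨c, by rw [hc, smul_eq_mul]; ring⟩
    have hcong : ∀ x y : ℤ, g ∣ (y - x) → f x = f y := by
      intro x y hd
      have h1 : (σ ^ (y - x)) d0 = d0 := (hmem _).mpr hd
      have h2 : (σ ^ y) d0 = (σ ^ x) d0 := by
        rw [show y = x + (y - x) by ring, zpow_add, Equiv.Perm.mul_apply, h1]
      rw [hfdef, hfdef, h2]
    have hdvd : ∀ x y : ℤ, f x = f y → g ∣ (y - x) := by
      intro x y hxy
      have h1 : Γ.Adj (f x) (f (y + 1)) := by rw [hxy]; exact traj_adj H d0 y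
      rcases traj_nbr H d0 h1 with h2 | h2
      · -- reversal case: impossible
        exfalso
        have hsymm : ((σ ^ y) d0).symm = (σ ^ (x - 1)) d0 := by
          apply SimpleGraph.Dart.ext
          apply Prod.ext
          · show ((σ ^ y) d0).snd = ((σ ^ (x - 1)) d0).fst
            rw [traj_snd H d0 y]
            exact h2
          · show ((σ ^ y) d0).fst = ((σ ^ (x - 1)) d0).snd
            rw [traj_snd H d0 (x - 1), show x - 1 + 1 = x by ring]
            exact hxy.symm
        have hrev : ∀ k : ℤ, f (y + k + 1) = f (x - 1 - k) := by
          intro k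
          have h3 : ((σ ^ (y + k)) d0).symm = (σ ^ (x - 1 - k)) d0 := by
            rw [show y + k = k + y by ring, zpow_add, Equiv.Perm.mul_apply,
              symm_pow, hsymm, ← Equiv.Perm.mul_apply, ← zpow_add,
              show -k + (x - 1) = x - 1 - k by ring]
          have h4 : ((σ ^ (y + k)) d0).symm.fst = ((σ ^ (x - 1 - k)) d0).fst := by
            rw [h3]
          have hl : ((σ ^ (y + k)) d0).symm.fst = ((σ ^ (y + k)) d0).snd := rfl
          rw [hl, traj_snd H d0 (y + k)] at h4
          exact h4
        have hall : ∀ t : ℤ, f t = f (x + y - t) := by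
          intro t
          have h5 := hrev (t - y - 1)
          rw [show y + (t - y - 1) + 1 = t by ring,
            show x - 1 - (t - y - 1) = x + y - t by ring] at h5
          exact h5
        rcases Int.even_or_odd (x + y) with ⟨t, ht⟩ | ⟨t, ht⟩
        · have h4 := hall (t + 1)
          rw [show x + y - (t + 1) = t - 1 by omega] at h4
          exact traj_ne H d0 t h4.symm
        · have h4 := hall t
          rw [show x + y - t = t + 1 by omega] at h4
          have h5 : Γ.Adj (f t) (f (t + 1)) := traj_adj H d0 t
          rw [← h4] at h5
          exact Γ.irrefl h5
      · -- shift case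
        have hde : (σ ^ x) d0 = (σ ^ y) d0 := by
          apply SimpleGraph.Dart.ext
          apply Prod.ext
          · exact hxy
          · show ((σ ^ x) d0).snd = ((σ ^ y) d0).snd
            rw [traj_snd H d0 x, traj_snd H d0 y]
            exact h2.symm
        have h3 : (σ ^ (y - x)) d0 = d0 := by
          calc (σ ^ (y - x)) d0 = (σ ^ (-x)) ((σ ^ y) d0) := by
                rw [show y - x = -x + y by ring, zpow_add, Equiv.Perm.mul_apply]
            _ = (σ ^ (-x)) ((σ ^ x) d0) := by rw [hde]
            _ = d0 := by
                rw [← Equiv.Perm.mul_apply, ← zpow_add, neg_add_cancel, zpow_zero,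
                  Equiv.Perm.one_apply]
        exact (hmem _).mp h3
    have hfeq : ∀ x y : ℤ, f x = f y ↔ ((g.natAbs : ℕ) : ℤ) ∣ (y - x) := by
      intro x y
      rw [Int.natAbs_dvd]
      exact ⟨hdvd x y, hcong x y⟩
    have hsur : ∀ u : V, ∃ n : ℤ, f n = u := by
      intro u
      have h0 : f 0 = v0 := by rw [hfdef, zpow_zero]; rfl
      have key : ∀ (s t : V), Γ.Walk s t → (∃ n, f n = s) → ∃ n, f n = t := by
        intro s t w
        induction w with
        | nil => exact id
        | cons hadj w ih =>
          rintro ⟨n, hn⟩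
          apply ih
          rw [← hn] at hadj
          rcases traj_nbr H d0 hadj with h | h
          · exact ⟨n - 1, h.symm⟩
          · exact ⟨n + 1, h.symm⟩
      obtain ⟨w⟩ := hΓ.preconnected v0 u
      exact key v0 u w ⟨0, h0⟩
    have hadjf : ∀ n : ℤ, Γ.Adj (f n) (f (n + 1)) := traj_adj H d0
    have hnbrf : ∀ (n : ℤ) (w : V), Γ.Adj (f n) w → w = f (n - 1) ∨ w = f (n + 1) :=
      fun n w hw => traj_nbr H d0 hw
    by_cases hp0 : g.natAbs = 0
    · -- infinite case
      right
      have hinj : Function.Injective f := by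
        intro x y hxy
        have h1 := (hfeq x y).mp hxy
        rw [hp0] at h1
        have := zero_dvd_iff.mp (by exact_mod_cast h1)
        omega
      exact iso_intCycle_of_inj f hinj hsur hadjf hnbrf
    · -- finite case
      left
      have hne01 : f 0 ≠ f 1 := (hadjf 0).ne
      have hne02 : f 0 ≠ f 2 := by
        have := traj_ne H d0 1
        rwa [show (1 : ℤ) - 1 = 0 by norm_num, show (1 : ℤ) + 1 = 2 by norm_num] at this
      have hne03 : f 0 ≠ f 3 := by
        intro h
        have hadj2 : Γ.Adj (f 2) (f 3) := by
          have := hadjf 2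
          rwa [show (2 : ℤ) + 1 = 3 by norm_num] at this
        rw [← h] at hadj2
        have hadj10 : Γ.Adj (f 1) (f 0) := by
          have := hadjf 0
          rwa [show (0 : ℤ) + 1 = 1 by norm_num, adj_comm] at this
        have hadj12 : Γ.Adj (f 1) (f 2) := by
          have := hadjf 1
          rwa [show (1 : ℤ) + 1 = 2 by norm_num] at this
        exact nonadj_of_adj H hadj10 hadj12 hne02 hadj2.symm
      have hp4 : 4 ≤ g.natAbs := by
        by_contra hlt
        push_neg at hlt
        interval_cases h : g.natAbs
        · exact hp0 rfl
        · exact hne01 ((hfeq 0 1).mpr (by norm_num))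
        · exact hne02 ((hfeq 0 2).mpr (by norm_num))
        · exact hne03 ((hfeq 0 3).mpr (by norm_num))
      exact ⟨g.natAbs, hp4, iso_cycle_of_period f g.natAbs hp4 hfeq hsur hadjf hnbrf⟩
  · intro h v
    rcases h with ⟨n, hn4, he⟩ | he
    · obtain ⟨e⟩ := he
      exact iso_of_locP (locP_map e v (locP_cycleGraph n hn4 (e v)))
    · obtain ⟨e⟩ := he
      exact iso_of_locP (locP_map e v (locP_intCycle (e v)))
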